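/- In R = F_q(z)[x;δ] with α a cyclic vector for the nonzero derivation δ, let g_T = [{x − L(δ^j(α))}_{j∈T}]_ℓ for nonempty T ⊆ {0,…,p−1}. Then for all T_1, T_2: [g_{T_1}, g_{T_2}]_ℓ = g_{T_1 ∪ T_2} and (g_{T_1}, g_{T_2})_r = g_{T_1 ∩ T_2}; in particular the greatest common right divisor of two fully α-decomposable polynomials is fully α-decomposable. -/

import Mathlib

open scoped BigOperators

/-- Coefficients of the product `f·g` in the differential operator ring `F[x;δ]`. -/
noncomputable def skewMul {F : Type*} [Field F] (δ : F → F) (f g : ℕ →₀ F) (n : ℕ) : F :=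
  ∑ i ∈ f.support, ∑ j ∈ g.support,
    if j ≤ n then f i * (Nat.choose i (n - j) : F) * δ^[i - (n - j)] (g j) else 0

/-- `f` is a right divisor of `g` in `F[x;δ]`: `g = q·f` for some `q`. -/
noncomputable def RDvd {F : Type*} [Field F] (δ : F → F) (f g : ℕ →₀ F) : Prop :=
  ∃ q : ℕ →₀ F, ∀ n : ℕ, g n = skewMul δ q f n

/-- `g` is monic of degree `m`. -/
def IsMonicOfDeg {F : Type*} [Field F] (g : ℕ →₀ F) (m : ℕ) : Prop :=
  g m = 1 ∧ ∀ n : ℕ, m < n → g n = 0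

/-- `g` is the fully `α`-decomposable polynomial `g_T`: the monic least left common
multiple of `{x − L(δ^j(α))}_{j ∈ T}` in `F_q(z)[x;δ]`. -/
noncomputable def IsGT {Fq : Type*} [Field Fq] {p : ℕ} (δ : RatFunc Fq → RatFunc Fq)
    (α : RatFunc Fq) (T : Finset (Fin p)) (g : ℕ →₀ RatFunc Fq) : Prop :=
  (∃ d : ℕ, IsMonicOfDeg g d) ∧
  (∀ j ∈ T, RDvd δ (Finsupp.single 1 1
      - Finsupp.single 0 (δ (δ^[(j : ℕ)] α) / δ^[(j : ℕ)] α)) g) ∧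
  (∀ h : ℕ →₀ RatFunc Fq,
    (∀ j ∈ T, RDvd δ (Finsupp.single 1 1
        - Finsupp.single 0 (δ (δ^[(j : ℕ)] α) / δ^[(j : ℕ)] α)) h) →
    RDvd δ g h)




open Finset

set_option linter.unusedSectionVars false
set_option maxHeartbeats 1000000
set_option synthInstance.maxHeartbeats 400000

section Skew
variable {F : Type*} [Field F] (δ : F → F)
variable (hadd : ∀ a b : F, δ (a + b) = δ a + δ b)
variable (hmul : ∀ a b : F, δ (a * b) = a * δ b + δ a * b)

include hadd hmul

lemma dzero : δ 0 = 0 := by have := hadd 0 0; simp at this; exact this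

lemma dsum {ι : Type*} (s : Finset ι) (f : ι → F) :
    δ (∑ i ∈ s, f i) = ∑ i ∈ s, δ (f i) := by
  classical
  induction s using Finset.induction_on with
  | empty => simp [dzero δ hadd hmul]
  | insert _ _ hx ih => simp only [Finset.sum_insert hx, hadd, ih]

lemma diter_add (k : ℕ) (a b : F) : δ^[k] (a + b) = δ^[k] a + δ^[k] b := by
  induction k generalizing a b with
  | zero => simp
  | succ k ih => simp only [Function.iterate_succ_apply, hadd, ih]

lemma diter_zero (k : ℕ) : δ^[k] 0 = 0 := by
  induction k with
  | zero => simp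
  | succ k ih => rw [Function.iterate_succ_apply, dzero δ hadd hmul, ih]

lemma dnat (n : ℕ) (a : F) : δ ((n : F) * a) = (n : F) * δ a := by
  induction n with
  | zero => simp [dzero δ hadd hmul]
  | succ n ih =>
    push_cast
    rw [add_mul, one_mul, hadd, ih, add_mul, one_mul]

lemma done : δ 1 = 0 := by have := hmul 1 1; simp at this; exact this

lemma dneg (a : F) : δ (-a) = - δ a := by
  have := hadd a (-a); simp [dzero δ hadd hmul] at this; linear_combination -this

lemma dconst_mul {c : F} (hc : δ c = 0) (a : F) : δ (c * a) = c * δ a := by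
  rw [hmul, hc]; ring

lemma diter_const_mul {c : F} (hc : δ c = 0) (k : ℕ) (a : F) :
    δ^[k] (c * a) = c * δ^[k] a := by
  induction k generalizing a with
  | zero => simp
  | succ k ih => simp only [Function.iterate_succ_apply, dconst_mul δ hadd hmul hc, ih]

lemma dinv {a : F} (ha : a ≠ 0) (hc : δ a = 0) : δ a⁻¹ = 0 := by
  have h1 : δ (a * a⁻¹) = 0 := by rw [mul_inv_cancel₀ ha, done δ hadd hmul]
  rw [hmul, hc] at h1
  simp only [zero_mul, add_zero] at h1
  rcases mul_eq_zero.1 h1 with h | h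
  · exact absurd h ha
  · exact h

/-- "Multiply by x on the left" on coefficient sequences: `(Dop h) n = h (n-1) + δ (h n)`. -/
noncomputable def Dop (h : ℕ →₀ F) : ℕ →₀ F :=
  Finsupp.onFinset (h.support.image Nat.succ ∪ h.support)
    (fun n => (if n = 0 then 0 else h (n - 1)) + δ (h n))
    (by
      intro n hn
      by_contra hmem
      simp only [mem_union, Finset.mem_image, Finsupp.mem_support_iff, not_or, not_exists,
        not_and] at hmem
      obtain ⟨h1, h2⟩ := hmem
      have hzn : h n = 0 := by by_contra hh; exact h2 hh
      apply hn
      show (if n = 0 then 0 else h (n - 1)) + δ (h n) = 0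
      rw [hzn, dzero δ hadd hmul, add_zero]
      rcases Nat.eq_zero_or_pos n with rfl | hpos
      · simp
      · rw [if_neg (Nat.pos_iff_ne_zero.1 hpos)]
        by_contra hh
        exact h1 (n - 1) hh (Nat.succ_pred_eq_of_pos hpos))

lemma Dop_apply (h : ℕ →₀ F) (n : ℕ) :
    Dop δ hadd hmul h n = (if n = 0 then 0 else h (n - 1)) + δ (h n) := rfl

lemma Dop_apply_succ (h : ℕ →₀ F) (n : ℕ) :
    Dop δ hadd hmul h (n + 1) = h n + δ (h (n + 1)) := by simp [Dop_apply]

lemma Dop_apply_zero (h : ℕ →₀ F) : Dop δ hadd hmul h 0 = δ (h 0) := by simp [Dop_apply]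

lemma Dop_add (h h' : ℕ →₀ F) :
    Dop δ hadd hmul (h + h') = Dop δ hadd hmul h + Dop δ hadd hmul h' := by
  ext n
  simp only [Dop_apply, Finsupp.add_apply, hadd]
  split_ifs <;> ring

lemma Dop_zero : Dop δ hadd hmul (0 : ℕ →₀ F) = 0 := by
  ext n; simp [Dop_apply, dzero δ hadd hmul]

lemma Dop_smul (a : F) (h : ℕ →₀ F) :
    Dop δ hadd hmul (a • h) = a • Dop δ hadd hmul h + δ a • h := by
  ext n
  simp only [Dop_apply, Finsupp.add_apply, Finsupp.smul_apply, smul_eq_mul, hmul]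
  split_ifs <;> ring


/-- The skew multiplication, as a genuine finsupp. -/
noncomputable def sMul (f g : ℕ →₀ F) : ℕ →₀ F :=
  ∑ i ∈ f.support, f i • (Dop δ hadd hmul)^[i] g

end Skew

section GenericAct
variable {F : Type*} [Field F] {M : Type*} [AddCommGroup M] (s : F → M → M) (D : M → M)
variable (hs1 : ∀ a b m, s (a + b) m = s a m + s b m)
variable (hs2 : ∀ a m m', s a (m + m') = s a m + s a m')
variable (hsm : ∀ a b m, s (a * b) m = s a (s b m))

include hs1 in
lemma s_zero_left (m : M) : s 0 m = 0 := by
  have h := hs1 0 0 m; rw [add_zero] at h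
  exact left_eq_add.mp h

include hs2 in
lemma s_zero_right (a : F) : s a 0 = 0 := by
  have h := hs2 a 0 0; rw [add_zero] at h
  exact left_eq_add.mp h

include hs2 in
lemma s_sum_right {ι : Type*} (a : F) (t : Finset ι) (f : ι → M) :
    s a (∑ i ∈ t, f i) = ∑ i ∈ t, s a (f i) := by
  classical
  induction t using Finset.induction_on with
  | empty => simpa using s_zero_right s hs2 a
  | insert _ _ hx ih => rw [Finset.sum_insert hx, Finset.sum_insert hx, hs2, ih]

/-- The action of a skew polynomial through `x ↦ D`, `c ↦ s c`. -/
noncomputable def act (f : ℕ →₀ F) (m : M) : M := ∑ i ∈ f.support, s (f i) (D^[i] m)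

include hs1 in
lemma act_superset {f : ℕ →₀ F} {S : Finset ℕ} (hS : f.support ⊆ S) (m : M) :
    act s D f m = ∑ i ∈ S, s (f i) (D^[i] m) := by
  simp only [act]
  refine Finset.sum_subset (f := fun i => s (f i) (D^[i] m)) hS ?_
  intro i _ hi
  rw [Finsupp.notMem_support_iff.mp hi, s_zero_left s hs1]

include hs1 in
lemma act_add_left (f g : ℕ →₀ F) (m : M) :
    act s D (f + g) m = act s D f m + act s D g m := by
  classical
  rw [act_superset s D hs1 (S := f.support ∪ g.support) Finsupp.support_add m,
    act_superset s D hs1 (S := f.support ∪ g.support) Finset.subset_union_left m,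
    act_superset s D hs1 (S := f.support ∪ g.support) Finset.subset_union_right m,
    ← Finset.sum_add_distrib]
  exact Finset.sum_congr rfl fun i _ => by rw [Finsupp.add_apply, hs1]

lemma act_zero_left (m : M) : act s D 0 m = 0 := by simp [act]

include hs1 in
lemma act_sum {ι : Type*} (t : Finset ι) (G : ι → (ℕ →₀ F)) (m : M) :
    act s D (∑ i ∈ t, G i) m = ∑ i ∈ t, act s D (G i) m := by
  classical
  induction t using Finset.induction_on with
  | empty => simpa using act_zero_left s D m
  | insert _ _ hx ih =>
    rw [Finset.sum_insert hx, Finset.sum_insert hx, act_add_left s D hs1, ih]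

include hs1 hs2 hsm in
lemma act_smul_left (a : F) (f : ℕ →₀ F) (m : M) :
    act s D (a • f) m = s a (act s D f m) := by
  classical
  rw [act_superset s D hs1 (S := f.support) Finsupp.support_smul m, act,
    s_sum_right s hs2]
  exact Finset.sum_congr rfl fun i _ => by rw [Finsupp.smul_apply, smul_eq_mul, hsm]

include hs1 in
lemma act_single (j : ℕ) (c : F) (m : M) :
    act s D (Finsupp.single j c) m = s c (D^[j] m) := by
  classical
  rw [act_superset s D hs1 (S := {j}) Finsupp.support_single_subset m,
    Finset.sum_singleton, Finsupp.single_eq_same]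

end GenericAct

section Skew2
variable {F : Type*} [Field F] (δ : F → F)
variable (hadd : ∀ a b : F, δ (a + b) = δ a + δ b)
variable (hmul : ∀ a b : F, δ (a * b) = a * δ b + δ a * b)
variable {M : Type*} [AddCommGroup M] (s : F → M → M) (D : M → M)
variable (hs1 : ∀ a b m, s (a + b) m = s a m + s b m)
variable (hs2 : ∀ a m m', s a (m + m') = s a m + s a m')
variable (hsm : ∀ a b m, s (a * b) m = s a (s b m))
variable (hD : ∀ m m', D (m + m') = D m + D m')
variable (hDs : ∀ a m, D (s a m) = s a (D m) + s (δ a) m)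

include hD in
lemma D_sum {ι : Type*} (t : Finset ι) (f : ι → M) :
    D (∑ i ∈ t, f i) = ∑ i ∈ t, D (f i) := by
  have hz : D (0 : M) = 0 := by
    have h := hD 0 0; rw [add_zero] at h; exact left_eq_add.mp h
  classical
  induction t using Finset.induction_on with
  | empty => simpa using hz
  | insert _ _ hx ih => rw [Finset.sum_insert hx, Finset.sum_insert hx, hD, ih]

include hadd hmul hs1 hs2 hD hDs in
lemma act_Dop (h : ℕ →₀ F) (m : M) :
    act s D (Dop δ hadd hmul h) m = D (act s D h m) := by
  classical
  have hsup : (Dop δ hadd hmul h).support ⊆ h.support.image Nat.succ ∪ h.support :=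
    Finsupp.support_onFinset_subset
  rw [act_superset s D hs1 hsup m]
  have step : ∀ n ∈ h.support.image Nat.succ ∪ h.support,
      s (Dop δ hadd hmul h n) (D^[n] m)
      = s (if n = 0 then 0 else h (n - 1)) (D^[n] m) + s (δ (h n)) (D^[n] m) := by
    intro n _
    rw [Dop_apply, hs1]
  rw [Finset.sum_congr rfl step, Finset.sum_add_distrib]
  have hA : ∑ n ∈ h.support.image Nat.succ ∪ h.support,
      s (if n = 0 then 0 else h (n - 1)) (D^[n] m)
      = ∑ k ∈ h.support, s (h k) (D^[k+1] m) := by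
    rw [← Finset.sum_subset (Finset.subset_union_left
        (s₂ := h.support) (s₁ := h.support.image Nat.succ))]
    · rw [Finset.sum_image (fun a _ b _ h => Nat.succ_injective h)]
      exact Finset.sum_congr rfl fun k _ => by simp
    · intro n _ hn
      rcases Nat.eq_zero_or_pos n with rfl | hpos
      · rw [if_pos rfl, s_zero_left s hs1]
      · rw [if_neg (Nat.pos_iff_ne_zero.mp hpos)]
        have : h (n - 1) = 0 := by
          by_contra hh
          exact hn (Finset.mem_image.mpr ⟨n - 1, Finsupp.mem_support_iff.mpr hh,
            Nat.succ_pred_eq_of_pos hpos⟩)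
        rw [this, s_zero_left s hs1]
  have hB : ∑ n ∈ h.support.image Nat.succ ∪ h.support, s (δ (h n)) (D^[n] m)
      = ∑ n ∈ h.support, s (δ (h n)) (D^[n] m) := by
    rw [← Finset.sum_subset (Finset.subset_union_right
        (s₂ := h.support) (s₁ := h.support.image Nat.succ))]
    intro n _ hn
    rw [Finsupp.notMem_support_iff.mp hn, dzero δ hadd hmul, s_zero_left s hs1]
  rw [hA, hB, act, D_sum D hD, ← Finset.sum_add_distrib]
  exact Finset.sum_congr rfl fun i _ => by
    rw [hDs, Function.iterate_succ_apply']

include hadd hmul hs1 hs2 hD hDs in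
lemma act_Dop_iter (i : ℕ) (h : ℕ →₀ F) (m : M) :
    act s D ((Dop δ hadd hmul)^[i] h) m = D^[i] (act s D h m) := by
  induction i generalizing h with
  | zero => rfl
  | succ i ih =>
    rw [Function.iterate_succ_apply' (Dop δ hadd hmul), Function.iterate_succ_apply' D,
      act_Dop δ hadd hmul s D hs1 hs2 hD hDs, ih]

include hadd hmul hs1 hs2 hsm hD hDs in
lemma act_sMul (f g : ℕ →₀ F) (m : M) :
    act s D (sMul δ hadd hmul f g) m = act s D f (act s D g m) := by
  classical
  rw [sMul, act_sum s D hs1]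
  exact Finset.sum_congr rfl fun i _ => by
    rw [act_smul_left s D hs1 hs2 hsm, act_Dop_iter δ hadd hmul s D hs1 hs2 hD hDs]

end Skew2

section Skew3
variable {F : Type*} [Field F] (δ : F → F)
variable (hadd : ∀ a b : F, δ (a + b) = δ a + δ b)
variable (hmul : ∀ a b : F, δ (a * b) = a * δ b + δ a * b)

include hadd hmul

/-- Abbreviation for the scalar action on the finsupp model. -/
lemma sMul_eq_act (f g : ℕ →₀ F) :
    sMul δ hadd hmul f g
      = act (fun (a : F) (m : ℕ →₀ F) => a • m) (Dop δ hadd hmul) f g := rfl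

lemma hs1₀ : ∀ (a b : F) (m : ℕ →₀ F), (a + b) • m = a • m + b • m :=
  fun a b m => add_smul a b m
lemma hs2₀ : ∀ (a : F) (m m' : ℕ →₀ F), a • (m + m') = a • m + a • m' :=
  fun a m m' => smul_add a m m'
lemma hsm₀ : ∀ (a b : F) (m : ℕ →₀ F), (a * b) • m = a • (b • m) :=
  fun a b m => mul_smul a b m

lemma sMul_assoc (f g h : ℕ →₀ F) :
    sMul δ hadd hmul (sMul δ hadd hmul f g) h = sMul δ hadd hmul f (sMul δ hadd hmul g h) := by
  rw [sMul_eq_act δ hadd hmul (sMul δ hadd hmul f g) h,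
    act_sMul δ hadd hmul _ _ (hs1₀ δ hadd hmul) (hs2₀ δ hadd hmul) (hsm₀ δ hadd hmul)
      (Dop_add δ hadd hmul) (Dop_smul δ hadd hmul) f g h]
  rfl

lemma sMul_add_left (f g h : ℕ →₀ F) :
    sMul δ hadd hmul (f + g) h = sMul δ hadd hmul f h + sMul δ hadd hmul g h := by
  rw [sMul_eq_act, act_add_left _ _ (hs1₀ δ hadd hmul)]; rfl

lemma sMul_zero_left (h : ℕ →₀ F) : sMul δ hadd hmul 0 h = 0 := by
  simp [sMul]

lemma Dop_iter_add (i : ℕ) (g h : ℕ →₀ F) :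
    (Dop δ hadd hmul)^[i] (g + h) = (Dop δ hadd hmul)^[i] g + (Dop δ hadd hmul)^[i] h := by
  induction i generalizing g h with
  | zero => rfl
  | succ i ih => simp only [Function.iterate_succ_apply, Dop_add, ih]

lemma Dop_iter_zero (i : ℕ) : (Dop δ hadd hmul)^[i] (0 : ℕ →₀ F) = 0 := by
  induction i with
  | zero => rfl
  | succ i ih => rw [Function.iterate_succ_apply, Dop_zero, ih]

lemma sMul_add_right (f g h : ℕ →₀ F) :
    sMul δ hadd hmul f (g + h) = sMul δ hadd hmul f g + sMul δ hadd hmul f h := by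
  simp only [sMul, Dop_iter_add δ hadd hmul, smul_add, Finset.sum_add_distrib]

lemma sMul_zero_right (f : ℕ →₀ F) : sMul δ hadd hmul f 0 = 0 := by
  simp [sMul, Dop_iter_zero δ hadd hmul]

lemma sMul_smul_left (a : F) (f g : ℕ →₀ F) :
    sMul δ hadd hmul (a • f) g = a • sMul δ hadd hmul f g := by
  rw [sMul_eq_act, act_smul_left _ _ (hs1₀ δ hadd hmul) (hs2₀ δ hadd hmul) (hsm₀ δ hadd hmul)]
  rfl

lemma sMul_single_left (j : ℕ) (c : F) (g : ℕ →₀ F) :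
    sMul δ hadd hmul (Finsupp.single j c) g = c • (Dop δ hadd hmul)^[j] g := by
  rw [sMul_eq_act, act_single _ _ (hs1₀ δ hadd hmul)]

lemma sMul_one_left (g : ℕ →₀ F) : sMul δ hadd hmul (Finsupp.single 0 1) g = g := by
  rw [sMul_single_left, Function.iterate_zero_apply, one_smul]

lemma sMul_sub_left (f g h : ℕ →₀ F) :
    sMul δ hadd hmul (f - g) h = sMul δ hadd hmul f h - sMul δ hadd hmul g h := by
  have := sMul_add_left δ hadd hmul (f - g) g h
  rw [sub_add_cancel] at this
  exact eq_sub_of_add_eq this.symm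

lemma sMul_sub_right (f g h : ℕ →₀ F) :
    sMul δ hadd hmul f (g - h) = sMul δ hadd hmul f g - sMul δ hadd hmul f h := by
  have := sMul_add_right δ hadd hmul f (g - h) h
  rw [sub_add_cancel] at this
  exact eq_sub_of_add_eq this.symm

omit hadd hmul in
/-- Evaluation of a skew polynomial at an element of `F` (`x` acts as `δ`). -/
noncomputable def ev (f : ℕ →₀ F) (a : F) : F := ∑ i ∈ f.support, f i * δ^[i] a

omit hadd hmul in
lemma ev_eq_act (f : ℕ →₀ F) (a : F) :
    ev δ f a = act (fun (c x : F) => c * x) δ f a := rfl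

omit hadd hmul in
lemma hs1F : ∀ (a b m : F), (a + b) * m = a * m + b * m := fun a b m => add_mul a b m
omit hadd hmul in
lemma hs2F : ∀ (a m m' : F), a * (m + m') = a * m + a * m' := fun a m m' => mul_add a m m'
omit hadd hmul in
lemma hsmF : ∀ (a b m : F), (a * b) * m = a * (b * m) := fun a b m => mul_assoc a b m

lemma ev_sMul (f g : ℕ →₀ F) (a : F) :
    ev δ (sMul δ hadd hmul f g) a = ev δ f (ev δ g a) := by
  rw [ev_eq_act, act_sMul δ hadd hmul _ _ hs1F hs2F hsmF hadd hmul]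
  rfl

omit hmul in
lemma ev_add_left (f g : ℕ →₀ F) (a : F) :
    ev δ (f + g) a = ev δ f a + ev δ g a := by
  rw [ev_eq_act, act_add_left _ _ hs1F]; rfl

omit hadd hmul in
lemma ev_single (j : ℕ) (c : F) (a : F) : ev δ (Finsupp.single j c) a = c * δ^[j] a := by
  rw [ev_eq_act, act_single _ _ hs1F]

omit hmul in
lemma ev_sub_left (f g : ℕ →₀ F) (a : F) :
    ev δ (f - g) a = ev δ f a - ev δ g a := by
  have := ev_add_left δ hadd (f - g) g a
  rw [sub_add_cancel] at this
  exact eq_sub_of_add_eq this.symm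

omit hmul in
lemma ev_w (c b : F) :
    ev δ (Finsupp.single 1 1 - Finsupp.single 0 c) b = δ b - c * b := by
  rw [ev_sub_left δ hadd, ev_single, ev_single]
  simp

include hadd hmul in
lemma ev_zero_right (f : ℕ →₀ F) : ev δ f 0 = 0 := by
  simp [ev, diter_zero δ hadd hmul]

end Skew3

section Skew4
variable {F : Type*} [Field F] (δ : F → F)
variable (hadd : ∀ a b : F, δ (a + b) = δ a + δ b)
variable (hmul : ∀ a b : F, δ (a * b) = a * δ b + δ a * b)

include hadd hmul

omit hadd hmul in
/-- Per-term Pascal identity used for the coefficient formula. -/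
lemma pascal_term (δ' : F → F) (i m j : ℕ) (c : F) :
    (if j ≤ m then (Nat.choose i (m - j) : F) * δ'^[i - (m - j)] c else 0)
      + (if j ≤ m + 1 then (Nat.choose i (m + 1 - j) : F) * δ'^[(i - (m + 1 - j)) + 1] c else 0)
    = if j ≤ m + 1 then (Nat.choose (i + 1) (m + 1 - j) : F) * δ'^[(i + 1) - (m + 1 - j)] c
      else 0 := by
  rcases Nat.lt_or_ge (m + 1) j with hj | hj
  · rw [if_neg (by omega), if_neg (by omega), if_neg (by omega), add_zero]
  rcases Nat.eq_or_lt_of_le hj with rfl | hj2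
  · rw [if_neg (by omega), if_pos le_rfl, if_pos le_rfl, zero_add]
    simp [Nat.sub_self]
  · have hjm : j ≤ m := by omega
    have hmj : m - j = (m + 1 - j) - 1 := by omega
    rw [if_pos hjm, if_pos hj, if_pos hj, hmj]
    generalize hk : m + 1 - j = k at *
    have hk1 : 1 ≤ k := by omega
    rcases Nat.lt_or_ge i (k - 1) with hik | hik
    · -- k > i + 1 : everything zero
      rw [Nat.choose_eq_zero_of_lt hik, Nat.choose_eq_zero_of_lt (by omega),
        Nat.choose_eq_zero_of_lt (by omega)]
      push_cast; ring
    rcases Nat.eq_or_lt_of_le hik with hik2 | hik2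
    · -- k = i + 1
      have hki : k = i + 1 := by omega
      subst hki
      rw [Nat.add_sub_cancel, Nat.choose_self, Nat.choose_succ_self, Nat.choose_self]
      have e1 : i - i = 0 := by omega
      have e2 : (i + 1) - (i + 1) = 0 := by omega
      rw [e1, e2]
      push_cast; ring
    · -- k ≤ i
      have hki : k ≤ i := by omega
      have e1 : i - (k - 1) = (i + 1) - k := by omega
      have e2 : (i - k) + 1 = (i + 1) - k := by omega
      have hch : Nat.choose (i + 1) k = Nat.choose i (k - 1) + Nat.choose i k := by
        have h2 := Nat.choose_succ_succ' i (k - 1)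
        rw [show k - 1 + 1 = k by omega] at h2
        rw [h2]
      rw [e1, e2, hch]
      push_cast; ring

lemma Dop_iter_apply (g : ℕ →₀ F) (i n : ℕ) :
    (Dop δ hadd hmul)^[i] g n
      = ∑ j ∈ g.support, if j ≤ n then
          (Nat.choose i (n - j) : F) * δ^[i - (n - j)] (g j) else 0 := by
  induction i generalizing n with
  | zero =>
    rw [Function.iterate_zero_apply]
    rw [Finset.sum_eq_single n]
    · simp
    · intro j hj hjn
      split_ifs with hle
      · rcases Nat.eq_or_lt_of_le hle with rfl | hlt
        · exact absurd rfl hjn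
        · rw [Nat.choose_eq_zero_of_lt (by omega)]
          simp
      · rfl
    · intro hn
      simp [Finsupp.notMem_support_iff.mp hn]
  | succ i ih =>
    rw [Function.iterate_succ_apply', Dop_apply]
    rcases Nat.eq_zero_or_pos n with rfl | hpos
    · rw [if_pos rfl, zero_add, ih 0, dsum δ hadd hmul]
      refine Finset.sum_congr rfl fun j hj => ?_
      rw [apply_ite δ, dzero δ hadd hmul, dnat δ hadd hmul]
      rcases Nat.eq_zero_or_pos j with rfl | hjpos
      · rw [if_pos (le_refl 0), if_pos (le_refl 0)]
        rw [← Function.iterate_succ_apply' δ]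
        simp
      · rw [if_neg (by omega), if_neg (by omega)]
    · obtain ⟨m, rfl⟩ := Nat.exists_eq_add_of_lt hpos
      rw [zero_add] at *
      rw [if_neg (Nat.succ_ne_zero m), Nat.add_sub_cancel, ih m, ih (m + 1),
        dsum δ hadd hmul, ← Finset.sum_add_distrib]
      refine Finset.sum_congr rfl fun j hj => ?_
      rw [apply_ite δ, dzero δ hadd hmul, dnat δ hadd hmul, ← Function.iterate_succ_apply' δ]
      exact pascal_term δ i m j (g j)

end Skew4


section Skew5
variable {F : Type*} [Field F] (δ : F → F)
variable (hadd : ∀ a b : F, δ (a + b) = δ a + δ b)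
variable (hmul : ∀ a b : F, δ (a * b) = a * δ b + δ a * b)

include hadd hmul

lemma skewMul_eq (f g : ℕ →₀ F) (n : ℕ) :
    skewMul δ f g n = sMul δ hadd hmul f g n := by
  rw [skewMul, sMul, Finsupp.finset_sum_apply]
  refine Finset.sum_congr rfl fun i _ => ?_
  rw [Finsupp.smul_apply, smul_eq_mul, Dop_iter_apply δ hadd hmul, Finset.mul_sum]
  refine Finset.sum_congr rfl fun j _ => ?_
  rw [mul_ite, mul_zero, mul_assoc]

lemma rdvd_iff (f g : ℕ →₀ F) :
    RDvd δ f g ↔ ∃ q : ℕ →₀ F, g = sMul δ hadd hmul q f := by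
  constructor
  · rintro ⟨q, hq⟩
    exact ⟨q, Finsupp.ext fun n => by rw [hq n, skewMul_eq δ hadd hmul]⟩
  · rintro ⟨q, rfl⟩
    exact ⟨q, fun n => (skewMul_eq δ hadd hmul q f n).symm⟩

lemma rdvd_trans {f g h : ℕ →₀ F} (h1 : RDvd δ f g) (h2 : RDvd δ g h) : RDvd δ f h := by
  rw [rdvd_iff δ hadd hmul] at *
  obtain ⟨q, rfl⟩ := h1
  obtain ⟨r, rfl⟩ := h2
  exact ⟨sMul δ hadd hmul r q, (sMul_assoc δ hadd hmul r q f).symm⟩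

lemma Dop_iter_coeff {g : ℕ →₀ F} {b : ℕ} (hb : ∀ k, b < k → g k = 0) (i : ℕ) :
    (∀ n, b + i < n → (Dop δ hadd hmul)^[i] g n = 0)
      ∧ (Dop δ hadd hmul)^[i] g (b + i) = g b := by
  induction i with
  | zero => exact ⟨fun n hn => hb n (by omega), rfl⟩
  | succ i ih =>
    obtain ⟨ih1, ih2⟩ := ih
    rw [Function.iterate_succ_apply']
    constructor
    · intro n hn
      rw [Dop_apply, if_neg (by omega), ih1 n (by omega), ih1 (n-1) (by omega),
        dzero δ hadd hmul, add_zero]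
    · rw [show b + (i + 1) = (b + i) + 1 by ring, Dop_apply_succ, ih2,
        ih1 (b + i + 1) (by omega), dzero δ hadd hmul, add_zero]

lemma sMul_coeff {f g : ℕ →₀ F} {a b : ℕ}
    (ha : ∀ k, a < k → f k = 0) (hb : ∀ k, b < k → g k = 0) :
    (∀ n, a + b < n → sMul δ hadd hmul f g n = 0)
      ∧ sMul δ hadd hmul f g (a + b) = f a * g b := by
  have hsupp : ∀ i ∈ f.support, i ≤ a := by
    intro i hi
    by_contra hia
    exact Finsupp.mem_support_iff.mp hi (ha i (by omega))
  constructor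
  · intro n hn
    rw [sMul, Finsupp.finset_sum_apply]
    refine Finset.sum_eq_zero fun i hi => ?_
    rw [Finsupp.smul_apply, (Dop_iter_coeff δ hadd hmul hb i).1 n
      (by have := hsupp i hi; omega), smul_zero]
  · rw [sMul, Finsupp.finset_sum_apply, Finset.sum_eq_single a]
    · rw [Finsupp.smul_apply, show a + b = b + a by ring,
        (Dop_iter_coeff δ hadd hmul hb a).2, smul_eq_mul]
    · intro i hi hia
      rw [Finsupp.smul_apply, (Dop_iter_coeff δ hadd hmul hb i).1 (a + b)
        (by have := hsupp i hi; omega), smul_zero]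
    · intro ha'
      rw [Finsupp.notMem_support_iff.mp ha', zero_smul]
      simp

lemma sMul_monic {f g : ℕ →₀ F} {a b : ℕ}
    (hf : IsMonicOfDeg f a) (hg : IsMonicOfDeg g b) :
    IsMonicOfDeg (sMul δ hadd hmul f g) (a + b) := by
  obtain ⟨hf1, hf2⟩ := hf
  obtain ⟨hg1, hg2⟩ := hg
  refine ⟨?_, fun n hn => (sMul_coeff δ hadd hmul hf2 hg2).1 n hn⟩
  rw [(sMul_coeff δ hadd hmul hf2 hg2).2, hf1, hg1, one_mul]

omit hadd hmul in
lemma exists_top {f : ℕ →₀ F} (hf : f ≠ 0) :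
    ∃ a, f a ≠ 0 ∧ ∀ k, a < k → f k = 0 := by
  have hne : f.support.Nonempty := Finsupp.support_nonempty_iff.mpr hf
  refine ⟨f.support.max' hne, Finsupp.mem_support_iff.mp (f.support.max'_mem hne), ?_⟩
  intro k hk
  by_contra hfk
  exact absurd (Finset.le_max' _ k (Finsupp.mem_support_iff.mpr hfk)) (by omega)

omit hadd hmul in
lemma monic_ne_zero {g : ℕ →₀ F} {m : ℕ} (hg : IsMonicOfDeg g m) : g ≠ 0 := by
  intro h
  have := hg.1
  rw [h] at this
  simp at this

/-- Quotient by a monic polynomial is monic of the difference degree. -/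
lemma monic_of_mul {g q f : ℕ →₀ F} {m n : ℕ}
    (hfac : g = sMul δ hadd hmul q f) (hf : IsMonicOfDeg f m) (hg : IsMonicOfDeg g n) :
    IsMonicOfDeg q (n - m) ∧ m ≤ n := by
  have hq0 : q ≠ 0 := by
    rintro rfl
    rw [sMul_zero_left] at hfac
    exact monic_ne_zero hg hfac
  obtain ⟨a, ha1, ha2⟩ := exists_top hq0
  have htop := (sMul_coeff δ hadd hmul ha2 hf.2).2
  have hbound := (sMul_coeff δ hadd hmul ha2 hf.2).1
  rw [hf.1, mul_one] at htop
  have hle : a + m ≤ n := by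
    by_contra hlt
    rw [← hfac] at htop
    exact ha1 (htop ▸ hg.2 (a + m) (by omega))
  have hge : n ≤ a + m := by
    by_contra hlt
    have h0 := hbound n (by omega)
    rw [← hfac] at h0
    rw [hg.1] at h0
    exact one_ne_zero h0
  have han : a = n - m := by omega
  subst han
  refine ⟨⟨?_, fun k hk => ha2 k (by omega)⟩, by omega⟩
  rw [← hfac] at htop
  have hgn : g (n - m + m) = 1 := by rw [Nat.sub_add_cancel (by omega)]; exact hg.1
  rw [← htop, hgn]

/-- Euclidean division by a monic polynomial. -/
lemma div_monic {g : ℕ →₀ F} {m : ℕ} (hg : IsMonicOfDeg g m) :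
    ∀ d (f : ℕ →₀ F), (∀ k, d ≤ k → f k = 0) →
      ∃ q r : ℕ →₀ F, f = sMul δ hadd hmul q g + r ∧ ∀ k, m ≤ k → r k = 0 := by
  intro d
  induction d with
  | zero =>
    intro f hf
    refine ⟨0, 0, ?_, fun k _ => rfl⟩
    rw [sMul_zero_left, add_zero]
    exact Finsupp.ext fun n => hf n (by omega)
  | succ d ih =>
    intro f hf
    rcases Nat.lt_or_ge d m with hdm | hdm
    · exact ⟨0, f, by rw [sMul_zero_left, zero_add], fun k hk => hf k (by omega)⟩
    · have hts : ∀ k, (d - m) < k → (Finsupp.single (d - m) (f d) : ℕ →₀ F) k = 0 := by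
        intro k hk
        rw [Finsupp.single_apply, if_neg (by omega)]
      have htb := (sMul_coeff δ hadd hmul hts hg.2).1
      have htt := (sMul_coeff δ hadd hmul hts hg.2).2
      rw [Finsupp.single_eq_same, hg.1, mul_one, Nat.sub_add_cancel hdm] at htt
      have hf' : ∀ k, d ≤ k →
          (f - sMul δ hadd hmul (Finsupp.single (d - m) (f d)) g) k = 0 := by
        intro k hk
        rcases Nat.eq_or_lt_of_le hk with rfl | hlt
        · rw [Finsupp.sub_apply, htt, sub_self]
        · rw [Finsupp.sub_apply, hf k (by omega), htb k (by omega), sub_self]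
      obtain ⟨q, r, heq, hr⟩ := ih _ hf'
      refine ⟨q + Finsupp.single (d - m) (f d), r, ?_, hr⟩
      rw [sMul_add_left]
      conv_lhs => rw [eq_add_of_sub_eq heq]
      abel

end Skew5

/-- Rank–nullity style bound for the kernel of a composition. -/
lemma finrank_ker_comp {K V : Type*} [Field K] [AddCommGroup V] [Module K V]
    [FiniteDimensional K V] (g h : V →ₗ[K] V) :
    Module.finrank K (LinearMap.ker (g ∘ₗ h))
      ≤ Module.finrank K (LinearMap.ker g) + Module.finrank K (LinearMap.ker h) := by
  classical
  have he : ∀ x : LinearMap.ker (g ∘ₗ h), h ((LinearMap.ker (g ∘ₗ h)).subtype x) ∈ LinearMap.ker g := by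
    intro x
    have := x.2
    simp only [LinearMap.mem_ker, LinearMap.comp_apply] at this ⊢
    exact this
  set e : ↥(LinearMap.ker (g ∘ₗ h)) →ₗ[K] ↥(LinearMap.ker g) :=
    LinearMap.codRestrict (LinearMap.ker g) (h ∘ₗ (LinearMap.ker (g ∘ₗ h)).subtype) he with he_def
  have h1 := LinearMap.finrank_range_add_finrank_ker e
  have h2 : Module.finrank K ↥(LinearMap.range e) ≤ Module.finrank K ↥(LinearMap.ker g) :=
    Submodule.finrank_le (LinearMap.range e)
  have hφmem : ∀ x : ↥(LinearMap.ker e),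
      ((LinearMap.ker (g ∘ₗ h)).subtype ∘ₗ (LinearMap.ker e).subtype) x ∈ LinearMap.ker h := by
    intro x
    have hx := x.2
    rw [LinearMap.mem_ker] at hx
    have h2 := congrArg Subtype.val hx
    simp only [he_def, LinearMap.codRestrict_apply, LinearMap.comp_apply,
      Submodule.coe_subtype, ZeroMemClass.coe_zero] at h2
    simp only [LinearMap.mem_ker, LinearMap.comp_apply, Submodule.coe_subtype]
    exact h2
  set φ : ↥(LinearMap.ker e) →ₗ[K] ↥(LinearMap.ker h) :=
    LinearMap.codRestrict (LinearMap.ker h)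
      ((LinearMap.ker (g ∘ₗ h)).subtype ∘ₗ (LinearMap.ker e).subtype) hφmem with hφ_def
  have hinj : Function.Injective φ := by
    intro x y hxy
    have := congrArg (Subtype.val) hxy
    simp only [hφ_def, LinearMap.codRestrict_apply, LinearMap.comp_apply,
      Submodule.coe_subtype] at this
    exact Subtype.ext (Subtype.ext this)
  have h3 := LinearMap.finrank_le_finrank_of_injective hinj
  omega

section Skew6
variable {F : Type*} [Field F] (δ : F → F)
variable (hadd : ∀ a b : F, δ (a + b) = δ a + δ b)
variable (hmul : ∀ a b : F, δ (a * b) = a * δ b + δ a * b)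

include hadd hmul

/-- The subfield of constants of `δ`. -/
noncomputable def consts : Subfield F where
  carrier := {a | δ a = 0}
  mul_mem' := by
    intro a b ha hb
    simp only [Set.mem_setOf_eq] at *
    rw [hmul, ha, hb]; ring
  one_mem' := done δ hadd hmul
  add_mem' := by
    intro a b ha hb
    simp only [Set.mem_setOf_eq] at *
    rw [hadd, ha, hb, add_zero]
  zero_mem' := dzero δ hadd hmul
  neg_mem' := by
    intro a ha
    simp only [Set.mem_setOf_eq] at *
    rw [dneg δ hadd hmul, ha, neg_zero]
  inv_mem' := by
    intro a ha
    simp only [Set.mem_setOf_eq] at *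
    rcases eq_or_ne a 0 with rfl | h0
    · rw [inv_zero]; exact dzero δ hadd hmul
    · exact dinv δ hadd hmul h0 ha

lemma mem_consts {a : F} : a ∈ consts δ hadd hmul ↔ δ a = 0 := Iff.rfl

lemma dinv' {a : F} (ha : a ≠ 0) : δ a⁻¹ = -(δ a) / (a * a) := by
  have h := hmul a a⁻¹
  rw [mul_inv_cancel₀ ha, done δ hadd hmul] at h
  rw [eq_div_iff (mul_ne_zero ha ha)]
  linear_combination (-a) * h + (-(δ a)) * (mul_inv_cancel₀ ha)

/-- Evaluation as a `consts`-linear map. -/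
noncomputable def evL (f : ℕ →₀ F) : F →ₗ[consts δ hadd hmul] F where
  toFun := ev δ f
  map_add' := by
    intro a b
    rw [ev, ev, ev, ← Finset.sum_add_distrib]
    exact Finset.sum_congr rfl fun i _ => by
      rw [diter_add δ hadd hmul, mul_add]
  map_smul' := by
    intro c a
    have hc : δ (c : F) = 0 := c.2
    have hs : ∀ x : F, c • x = (c : F) * x := fun x => rfl
    simp only [RingHom.id_apply, hs]
    rw [ev, ev, Finset.mul_sum]
    exact Finset.sum_congr rfl fun i _ => by
      rw [diter_const_mul δ hadd hmul hc]; ring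

lemma evL_apply (f : ℕ →₀ F) (a : F) : evL δ hadd hmul f a = ev δ f a := rfl

/-- Solution space of a skew polynomial. -/
noncomputable def Sol (f : ℕ →₀ F) : Submodule (consts δ hadd hmul) F :=
  LinearMap.ker (evL δ hadd hmul f)

omit hadd hmul in
lemma monic_w (c : F) : IsMonicOfDeg (Finsupp.single 1 1 - Finsupp.single 0 c) 1 := by
  constructor
  · rw [Finsupp.sub_apply, Finsupp.single_eq_same, Finsupp.single_apply, if_neg (by omega),
      sub_zero]
  · intro n hn
    rw [Finsupp.sub_apply, Finsupp.single_apply, Finsupp.single_apply, if_neg (by omega),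
      if_neg (by omega), sub_zero]

/-- Key factorization: a monic `f` with a nonzero solution `a` factors through `x - δa/a`. -/
lemma factor_of_sol {f : ℕ →₀ F} {m : ℕ} (hf : IsMonicOfDeg f (m + 1))
    {a : F} (ha : a ≠ 0) (hsol : ev δ f a = 0) :
    ∃ q : ℕ →₀ F, f = sMul δ hadd hmul q (Finsupp.single 1 1 - Finsupp.single 0 (δ a / a))
      ∧ IsMonicOfDeg q m := by
  obtain ⟨q, r, heq, hr⟩ := div_monic δ hadd hmul (monic_w (δ a / a)) (m + 2) f
    (fun k hk => hf.2 k (by omega))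
  have hwa : ev δ (Finsupp.single 1 1 - Finsupp.single 0 (δ a / a)) a = 0 := by
    rw [ev_w δ hadd, div_mul_cancel₀ _ ha, sub_self]
  have hra : ev δ r a = r 0 * a := by
    have hrs : r = Finsupp.single 0 (r 0) := by
      ext n
      rcases Nat.eq_zero_or_pos n with rfl | hpos
      · rw [Finsupp.single_eq_same]
      · rw [hr n (by omega), Finsupp.single_apply, if_neg (by omega)]
    rw [hrs, ev_single]
    simp [Finsupp.single_eq_same]
  have h0 : r 0 * a = 0 := by
    rw [← hra]
    have := hsol
    rw [heq, ev_add_left δ hadd, ev_sMul δ hadd hmul, hwa, ev_zero_right δ hadd hmul,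
      zero_add] at this
    exact this
  have hr0 : r 0 = 0 := by
    rcases mul_eq_zero.mp h0 with h | h
    · exact h
    · exact absurd h ha
  have hrz : r = 0 := by
    ext n
    rcases Nat.eq_zero_or_pos n with rfl | hpos
    · simpa using hr0
    · simpa using hr n (by omega)
  rw [hrz, add_zero] at heq
  have := monic_of_mul δ hadd hmul heq (monic_w (δ a / a)) hf
  exact ⟨q, heq, by simpa using this.1⟩

lemma sol_rank_le (hFD : FiniteDimensional (consts δ hadd hmul) F) :
    ∀ (m : ℕ) (f : ℕ →₀ F), IsMonicOfDeg f m →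
      Module.finrank (consts δ hadd hmul) ↥(Sol δ hadd hmul f) ≤ m := by
  haveI := hFD
  intro m
  induction m with
  | zero =>
    intro f hf
    have hfs : f = Finsupp.single 0 1 := by
      ext n
      rcases Nat.eq_zero_or_pos n with rfl | hpos
      · rw [hf.1, Finsupp.single_eq_same]
      · rw [hf.2 n (by omega), Finsupp.single_apply, if_neg (by omega)]
    have : Sol δ hadd hmul f = ⊥ := by
      rw [Sol, LinearMap.ker_eq_bot']
      intro x hx
      rw [evL_apply, hfs, ev_single] at hx
      simpa using hx
    rw [this]
    simp
  | succ m ih =>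
    intro f hf
    by_cases hbot : Sol δ hadd hmul f = ⊥
    · rw [hbot]; simp
    · obtain ⟨a, hamem, ha⟩ := Submodule.ne_bot_iff _ |>.mp hbot
      have hsol : ev δ f a = 0 := hamem
      obtain ⟨q, heq, hq⟩ := factor_of_sol δ hadd hmul hf ha hsol
      set w : ℕ →₀ F := Finsupp.single 1 1 - Finsupp.single 0 (δ a / a) with hw
      have hcomp : evL δ hadd hmul f = (evL δ hadd hmul q) ∘ₗ (evL δ hadd hmul w) := by
        apply LinearMap.ext
        intro x
        rw [LinearMap.comp_apply, evL_apply, evL_apply, evL_apply, heq,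
          ev_sMul δ hadd hmul]
      have hkw : Module.finrank (consts δ hadd hmul) ↥(Sol δ hadd hmul w) ≤ 1 := by
        have hsub : Sol δ hadd hmul w ≤ Submodule.span (consts δ hadd hmul) {a} := by
          intro b hb
          have hb' : δ b - (δ a / a) * b = 0 := by
            have := hb
            rw [Sol, LinearMap.mem_ker, evL_apply, hw, ev_w δ hadd] at this
            exact this
          rcases eq_or_ne b 0 with rfl | hb0
          · exact Submodule.zero_mem _
          · have hdb : δ b = (δ a / a) * b := by linear_combination hb'
            have hmem : b * a⁻¹ ∈ consts δ hadd hmul := by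
              rw [mem_consts, hmul, dinv' δ hadd hmul ha, hdb]
              field_simp
              ring
            refine Submodule.mem_span_singleton.mpr ⟨⟨b * a⁻¹, hmem⟩, ?_⟩
            show (b * a⁻¹) * a = b
            field_simp
        calc Module.finrank (consts δ hadd hmul) ↥(Sol δ hadd hmul w)
            ≤ Module.finrank (consts δ hadd hmul) ↥(Submodule.span (consts δ hadd hmul) {a}) :=
              Submodule.finrank_mono hsub
          _ = 1 := finrank_span_singleton ha
      have hcompk := finrank_ker_comp (evL δ hadd hmul q) (evL δ hadd hmul w)
      rw [← hcomp] at hcompk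
      have hih := ih q hq
      have : Module.finrank (consts δ hadd hmul) ↥(Sol δ hadd hmul f)
          ≤ Module.finrank (consts δ hadd hmul) ↥(Sol δ hadd hmul q)
            + Module.finrank (consts δ hadd hmul) ↥(Sol δ hadd hmul w) := hcompk
      omega

end Skew6


section Gcrd
variable {F : Type*} [Field F] (δ : F → F)
variable (hadd : ∀ a b : F, δ (a + b) = δ a + δ b)
variable (hmul : ∀ a b : F, δ (a * b) = a * δ b + δ a * b)

include hadd hmul

lemma sol_of_dvd {f g : ℕ →₀ F} (hdvd : RDvd δ f g) {x : F} (hx : ev δ f x = 0) :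
    ev δ g x = 0 := by
  obtain ⟨q, rfl⟩ := (rdvd_iff δ hadd hmul f g).mp hdvd
  rw [ev_sMul δ hadd hmul, hx, ev_zero_right δ hadd hmul]

/-- If `x ≠ 0` is a root of `h` then `x - δx/x` right-divides `h`. -/
lemma dvd_of_root {h : ℕ →₀ F} {x : F} (hx : x ≠ 0) (hev : ev δ h x = 0) :
    RDvd δ (Finsupp.single 1 1 - Finsupp.single 0 (δ x / x)) h := by
  rw [rdvd_iff δ hadd hmul]
  rcases eq_or_ne h 0 with rfl | h0
  · exact ⟨0, (sMul_zero_left δ hadd hmul _).symm⟩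
  obtain ⟨N, _, hN2⟩ := exists_top h0
  obtain ⟨q, r, heq, hr⟩ := div_monic δ hadd hmul (monic_w (δ x / x)) (N + 1) h
    (fun k hk => hN2 k (by omega))
  have hwx : ev δ (Finsupp.single 1 1 - Finsupp.single 0 (δ x / x)) x = 0 := by
    rw [ev_w δ hadd, div_mul_cancel₀ _ hx, sub_self]
  have hra : ev δ r x = r 0 * x := by
    have hrs : r = Finsupp.single 0 (r 0) := by
      ext n
      rcases Nat.eq_zero_or_pos n with rfl | hpos
      · rw [Finsupp.single_eq_same]
      · rw [hr n (by omega), Finsupp.single_apply, if_neg (by omega)]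
    rw [hrs, ev_single]
    simp [Finsupp.single_eq_same]
  have h0' : r 0 * x = 0 := by
    rw [← hra]
    have hh := hev
    rw [heq, ev_add_left δ hadd, ev_sMul δ hadd hmul, hwx, ev_zero_right δ hadd hmul,
      zero_add] at hh
    exact hh
  have hr0 : r 0 = 0 := by
    rcases mul_eq_zero.mp h0' with hc | hc
    · exact hc
    · exact absurd hc hx
  have hrz : r = 0 := by
    ext n
    rcases Nat.eq_zero_or_pos n with rfl | hpos
    · simpa using hr0
    · simpa using hr n (by omega)
  rw [hrz, add_zero] at heq
  exact ⟨q, heq⟩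

/-- Existence of a monic gcrd which is a left combination of `g₁, g₂` and
right-divides both. -/
lemma exists_gcrd {g₁ g₂ : ℕ →₀ F} {d₁ d₂ : ℕ}
    (h₁ : IsMonicOfDeg g₁ d₁) (h₂ : IsMonicOfDeg g₂ d₂) :
    ∃ (d : ℕ →₀ F) (Dd : ℕ), IsMonicOfDeg d Dd ∧
      (∃ A B, d = sMul δ hadd hmul A g₁ + sMul δ hadd hmul B g₂) ∧
      RDvd δ d g₁ ∧ RDvd δ d g₂ := by
  classical
  set comb : (ℕ →₀ F) → Prop :=
    fun f => ∃ A B, f = sMul δ hadd hmul A g₁ + sMul δ hadd hmul B g₂ with hcomb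
  have comb_sub : ∀ f f', comb f → comb f' → comb (f - f') := by
    rintro f f' ⟨A, B, rfl⟩ ⟨A', B', rfl⟩
    refine ⟨A - A', B - B', ?_⟩
    rw [sMul_sub_left δ hadd hmul, sMul_sub_left δ hadd hmul]
    abel
  have comb_mul : ∀ q f, comb f → comb (sMul δ hadd hmul q f) := by
    rintro q f ⟨A, B, rfl⟩
    refine ⟨sMul δ hadd hmul q A, sMul δ hadd hmul q B, ?_⟩
    rw [sMul_add_right δ hadd hmul, sMul_assoc δ hadd hmul, sMul_assoc δ hadd hmul]
  have comb_smul : ∀ (u : F) f, comb f → comb (u • f) := by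
    intro u f hf
    have : u • f = sMul δ hadd hmul (Finsupp.single 0 u) f := by
      rw [sMul_single_left δ hadd hmul, Function.iterate_zero_apply]
    rw [this]
    exact comb_mul _ _ hf
  have hP : ∃ m, ∃ h, comb h ∧ IsMonicOfDeg h m := by
    refine ⟨d₁, g₁, ⟨Finsupp.single 0 1, 0, ?_⟩, h₁⟩
    rw [sMul_one_left δ hadd hmul, sMul_zero_left δ hadd hmul, add_zero]
  set Dd := Nat.find hP with hDd
  obtain ⟨d, hdcomb, hdmon⟩ := Nat.find_spec hP
  have hdvd : ∀ (f : ℕ →₀ F) (df : ℕ), IsMonicOfDeg f df → comb f → RDvd δ d f := by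
    intro f df hfmon hfcomb
    obtain ⟨q, r, heq, hr⟩ := div_monic δ hadd hmul hdmon (df + 1) f
      (fun k hk => hfmon.2 k (by omega))
    have hrcomb : comb r := by
      have : r = f - sMul δ hadd hmul q d := by rw [heq]; abel
      rw [this]
      exact comb_sub _ _ hfcomb (comb_mul _ _ hdcomb)
    rcases eq_or_ne r 0 with hrz | hrz
    · rw [hrz, add_zero] at heq
      exact (rdvd_iff δ hadd hmul d f).mpr ⟨q, heq⟩
    · exfalso
      obtain ⟨N, hN1, hN2⟩ := exists_top hrz
      have hND : N < Dd := by
        by_contra hc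
        exact hN1 (hr N (by omega))
      have hmon' : IsMonicOfDeg ((r N)⁻¹ • r) N := by
        constructor
        · rw [Finsupp.smul_apply, smul_eq_mul, inv_mul_cancel₀ hN1]
        · intro n hn
          rw [Finsupp.smul_apply, hN2 n (by omega), smul_zero]
      exact Nat.find_min hP hND ⟨(r N)⁻¹ • r, comb_smul _ _ hrcomb, hmon'⟩
  refine ⟨d, Dd, hdmon, hdcomb, ?_, ?_⟩
  · exact hdvd g₁ d₁ h₁ ⟨Finsupp.single 0 1, 0, by
      rw [sMul_one_left δ hadd hmul, sMul_zero_left δ hadd hmul, add_zero]⟩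
  · exact hdvd g₂ d₂ h₂ ⟨0, Finsupp.single 0 1, by
      rw [sMul_zero_left δ hadd hmul, sMul_one_left δ hadd hmul, zero_add]⟩

/-- A common right divisor of `g₁, g₂` right-divides any left combination. -/
lemma rdvd_comb {h g₁ g₂ f : ℕ →₀ F} (h1 : RDvd δ h g₁) (h2 : RDvd δ h g₂)
    (hf : ∃ A B, f = sMul δ hadd hmul A g₁ + sMul δ hadd hmul B g₂) :
    RDvd δ h f := by
  obtain ⟨q₁, rfl⟩ := (rdvd_iff δ hadd hmul _ _).mp h1
  obtain ⟨q₂, rfl⟩ := (rdvd_iff δ hadd hmul _ _).mp h2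
  obtain ⟨A, B, rfl⟩ := hf
  refine (rdvd_iff δ hadd hmul _ _).mpr
    ⟨sMul δ hadd hmul A q₁ + sMul δ hadd hmul B q₂, ?_⟩
  rw [sMul_add_left δ hadd hmul, sMul_assoc δ hadd hmul, sMul_assoc δ hadd hmul]

end Gcrd

section Main
variable {Fq : Type*} [Field Fq] {p : ℕ}
variable (δ : RatFunc Fq → RatFunc Fq)
variable (hadd : ∀ a b : RatFunc Fq, δ (a + b) = δ a + δ b)
variable (hmul : ∀ a b : RatFunc Fq, δ (a * b) = a * δ b + δ a * b)
variable (α : RatFunc Fq)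
variable (hli : ∀ a : Fin p → RatFunc Fq, (∀ i, δ (a i) = 0) →
    ∑ i, a i * δ^[(i : ℕ)] α = 0 → ∀ i, a i = 0)
variable (hspan : ∀ f : RatFunc Fq, ∃ a : Fin p → RatFunc Fq,
    (∀ i, δ (a i) = 0) ∧ f = ∑ i, a i * δ^[(i : ℕ)] α)

/-- The linear polynomial `x - δ(δ^j α)/δ^j α`. -/
noncomputable def wpol (j : Fin p) : ℕ →₀ RatFunc Fq :=
  Finsupp.single 1 1 - Finsupp.single 0 (δ (δ^[(j : ℕ)] α) / δ^[(j : ℕ)] α)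

lemma isGT_iff (T : Finset (Fin p)) (g : ℕ →₀ RatFunc Fq) :
    IsGT δ α T g ↔
      ((∃ d : ℕ, IsMonicOfDeg g d) ∧
        (∀ j ∈ T, RDvd δ (wpol δ α j) g) ∧
        (∀ h : ℕ →₀ RatFunc Fq, (∀ j ∈ T, RDvd δ (wpol δ α j) h) → RDvd δ g h)) :=
  Iff.rfl

include hadd hmul

include hli in
lemma alpha_ne (j : Fin p) : δ^[(j : ℕ)] α ≠ 0 := by
  intro h0
  have h1 := hli (fun i => if i = j then 1 else 0)
    (fun i => by
      split_ifs
      · exact done δ hadd hmul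
      · exact dzero δ hadd hmul)
    (by
      rw [Finset.sum_eq_single j]
      · rw [if_pos rfl, one_mul, h0]
      · intro i _ hij
        rw [if_neg hij, zero_mul]
      · intro hj
        exact absurd (Finset.mem_univ j) hj) j
  simp at h1

include hli in
lemma ev_wpol_alpha (j : Fin p) : ev δ (wpol δ α j) (δ^[(j : ℕ)] α) = 0 := by
  rw [wpol, ev_w δ hadd, div_mul_cancel₀ _ (alpha_ne δ hadd hmul α hli j), sub_self]

include hli in
lemma li_family :
    LinearIndependent (consts δ hadd hmul) (fun i : Fin p => δ^[(i : ℕ)] α) := by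
  rw [Fintype.linearIndependent_iff]
  intro g hg i
  have h := hli (fun i => (g i : RatFunc Fq)) (fun i => (g i).2)
    (by
      have : ∀ i : Fin p, (g i : RatFunc Fq) * δ^[(i : ℕ)] α = g i • δ^[(i : ℕ)] α :=
        fun i => rfl
      rw [Finset.sum_congr rfl (fun i _ => this i)]
      exact hg) i
  exact Subtype.ext h

include hspan in
lemma span_family :
    ⊤ ≤ Submodule.span (consts δ hadd hmul)
      (Set.range (fun i : Fin p => δ^[(i : ℕ)] α)) := by
  intro f _
  obtain ⟨a, ha, hf⟩ := hspan f
  rw [hf]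
  refine Submodule.sum_mem _ fun i _ => ?_
  have : a i * δ^[(i : ℕ)] α = (⟨a i, ha i⟩ : consts δ hadd hmul) • δ^[(i : ℕ)] α := rfl
  rw [this]
  exact Submodule.smul_mem _ _ (Submodule.subset_span (Set.mem_range_self i))

/-- Basis of `F_q(z)` over the constants, given by `δ^i α`. -/
noncomputable def bC : Module.Basis (Fin p) (consts δ hadd hmul) (RatFunc Fq) :=
  Module.Basis.mk (li_family δ hadd hmul α hli) (span_family δ hadd hmul α hspan)

lemma bC_apply (i : Fin p) : bC δ hadd hmul α hli hspan i = δ^[(i : ℕ)] α :=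
  Module.Basis.mk_apply _ _ _

include hli hspan in
lemma FD : FiniteDimensional (consts δ hadd hmul) (RatFunc Fq) :=
  Module.Basis.finiteDimensional_of_finite (bC δ hadd hmul α hli hspan)

include hli hspan in
lemma finrank_VT (T : Finset (Fin p)) :
    Module.finrank (consts δ hadd hmul)
      ↥(Submodule.span (consts δ hadd hmul) (⇑(bC δ hadd hmul α hli hspan) '' ↑T))
      = T.card := by
  classical
  rw [Set.image_eq_range]
  have hli2 : LinearIndependent (consts δ hadd hmul)
      (fun x : {x : Fin p // x ∈ (↑T : Set (Fin p))} => bC δ hadd hmul α hli hspan ↑x) :=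
    (bC δ hadd hmul α hli hspan).linearIndependent.comp
      (Subtype.val : {x : Fin p // x ∈ (↑T : Set (Fin p))} → Fin p) Subtype.val_injective
  rw [finrank_span_eq_card hli2]
  simp

lemma mem_sol {f x} : x ∈ Sol δ hadd hmul f ↔ ev δ f x = 0 := Iff.rfl

include hli in
lemma exists_killer (T : Finset (Fin p)) :
    ∃ (h : ℕ →₀ RatFunc Fq) (dh : ℕ), dh ≤ T.card ∧ IsMonicOfDeg h dh ∧
      ∀ j ∈ T, ev δ h (δ^[(j : ℕ)] α) = 0 := by
  classical
  induction T using Finset.induction_on with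
  | empty =>
    refine ⟨Finsupp.single 0 1, 0, le_rfl, ⟨Finsupp.single_eq_same, ?_⟩, by simp⟩
    intro n hn
    rw [Finsupp.single_apply, if_neg (by omega)]
  | @insert j' T hj' ih =>
    obtain ⟨h, dh, hle, hmon, hkill⟩ := ih
    by_cases hv : ev δ h (δ^[(j' : ℕ)] α) = 0
    · refine ⟨h, dh, le_trans hle (Finset.card_le_card (Finset.subset_insert _ _)),
        hmon, ?_⟩
      intro j hj
      rcases Finset.mem_insert.mp hj with rfl | hjT
      · exact hv
      · exact hkill j hjT
    · refine ⟨sMul δ hadd hmul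
        (Finsupp.single 1 1 - Finsupp.single 0 (δ (ev δ h (δ^[(j' : ℕ)] α)) / ev δ h (δ^[(j' : ℕ)] α))) h,
        1 + dh, ?_, sMul_monic δ hadd hmul (monic_w _) hmon, ?_⟩
      · rw [Finset.card_insert_of_notMem hj']; omega
      · intro j hj
        rw [ev_sMul δ hadd hmul]
        rcases Finset.mem_insert.mp hj with rfl | hjT
        · rw [ev_w δ hadd, div_mul_cancel₀ _ hv, sub_self]
        · rw [hkill j hjT, ev_zero_right δ hadd hmul]

include hli hspan in
/-- `g_T` is monic of degree `#T` and its solution space is the span of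
`{δ^j α : j ∈ T}`. -/
lemma isGT_facts {T : Finset (Fin p)} {g : ℕ →₀ RatFunc Fq} (hg : IsGT δ α T g) :
    IsMonicOfDeg g T.card ∧
      Sol δ hadd hmul g
        = Submodule.span (consts δ hadd hmul) (⇑(bC δ hadd hmul α hli hspan) '' ↑T) := by
  haveI := FD δ hadd hmul α hli hspan
  obtain ⟨⟨dg, hdg⟩, hdvdT, huniv⟩ := (isGT_iff δ α T g).mp hg
  obtain ⟨h, dh, hdhle, hmonh, hkill⟩ := exists_killer δ hadd hmul α hli T
  have hdvdall : ∀ j ∈ T, RDvd δ (wpol δ α j) h := by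
    intro j hj
    exact dvd_of_root δ hadd hmul (alpha_ne δ hadd hmul α hli j) (hkill j hj)
  obtain ⟨q, hfac⟩ := (rdvd_iff δ hadd hmul g h).mp (huniv h hdvdall)
  have hupper := (monic_of_mul δ hadd hmul hfac hdg hmonh).2
  have hspanle : Submodule.span (consts δ hadd hmul)
      (⇑(bC δ hadd hmul α hli hspan) '' ↑T) ≤ Sol δ hadd hmul g := by
    rw [Submodule.span_le]
    rintro x ⟨j, hjT, rfl⟩
    rw [SetLike.mem_coe, mem_sol δ hadd hmul, bC_apply]
    exact sol_of_dvd δ hadd hmul (hdvdT j hjT) (ev_wpol_alpha δ hadd hmul α hli j)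
  have hlow : T.card ≤ Module.finrank (consts δ hadd hmul) ↥(Sol δ hadd hmul g) := by
    rw [← finrank_VT δ hadd hmul α hli hspan T]
    exact Submodule.finrank_mono hspanle
  have hrank := sol_rank_le δ hadd hmul (FD δ hadd hmul α hli hspan) dg g hdg
  have hcard : dg = T.card := by omega
  subst hcard
  refine ⟨hdg, ?_⟩
  refine (Submodule.eq_of_le_of_finrank_le hspanle ?_).symm
  rw [finrank_VT δ hadd hmul α hli hspan T]
  exact hrank

end Main

/-- For fully `α`-decomposable polynomials `g_T`: `g_{T₁ ∪ T₂}` is the least left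
common multiple of `g_{T₁}` and `g_{T₂}`, and `g_{T₁ ∩ T₂}` is their greatest common
right divisor; in particular, the greatest common right divisor of two fully
`α`-decomposable polynomials is fully `α`-decomposable. -/
theorem gT_lclm_gcrd (Fq : Type*) [Field Fq] [Fintype Fq]
    (p : ℕ) [Fact p.Prime] [CharP Fq p]
    (δ : RatFunc Fq → RatFunc Fq)
    (hadd : ∀ a b : RatFunc Fq, δ (a + b) = δ a + δ b)
    (hmul : ∀ a b : RatFunc Fq, δ (a * b) = a * δ b + δ a * b)
    (hδ : δ ≠ 0)
    (α : RatFunc Fq)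
    (hli : ∀ a : Fin p → RatFunc Fq, (∀ i, δ (a i) = 0) →
      ∑ i, a i * δ^[(i : ℕ)] α = 0 → ∀ i, a i = 0)
    (hspan : ∀ f : RatFunc Fq, ∃ a : Fin p → RatFunc Fq,
      (∀ i, δ (a i) = 0) ∧ f = ∑ i, a i * δ^[(i : ℕ)] α)
    (T₁ T₂ : Finset (Fin p)) (hT₁ : T₁.Nonempty) (hT₂ : T₂.Nonempty)
    (g₁ g₂ g₁₂ gI : ℕ →₀ RatFunc Fq)
    (hg₁ : IsGT δ α T₁ g₁) (hg₂ : IsGT δ α T₂ g₂)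
    (hg₁₂ : IsGT δ α (T₁ ∪ T₂) g₁₂) (hgI : IsGT δ α (T₁ ∩ T₂) gI) :
    -- `g_{T₁ ∪ T₂} = [g_{T₁}, g_{T₂}]_ℓ`
    (RDvd δ g₁ g₁₂ ∧ RDvd δ g₂ g₁₂ ∧
      ∀ h : ℕ →₀ RatFunc Fq, RDvd δ g₁ h → RDvd δ g₂ h → RDvd δ g₁₂ h) ∧
    -- `g_{T₁ ∩ T₂} = (g_{T₁}, g_{T₂})_r`
    (RDvd δ gI g₁ ∧ RDvd δ gI g₂ ∧
      ∀ h : ℕ →₀ RatFunc Fq, RDvd δ h g₁ → RDvd δ h g₂ → RDvd δ h gI) := by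
  classical
  haveI := FD δ hadd hmul α hli hspan
  obtain ⟨hmon1', hdvd1, huniv1⟩ := (isGT_iff δ α T₁ g₁).mp hg₁
  obtain ⟨hmon2', hdvd2, huniv2⟩ := (isGT_iff δ α T₂ g₂).mp hg₂
  obtain ⟨hmon12', hdvd12, huniv12⟩ := (isGT_iff δ α (T₁ ∪ T₂) g₁₂).mp hg₁₂
  obtain ⟨hmonI', hdvdI, hunivI⟩ := (isGT_iff δ α (T₁ ∩ T₂) gI).mp hgI
  have hg1m := (isGT_facts δ hadd hmul α hli hspan hg₁).1
  have hSol1 := (isGT_facts δ hadd hmul α hli hspan hg₁).2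
  have hg2m := (isGT_facts δ hadd hmul α hli hspan hg₂).1
  have hSol2 := (isGT_facts δ hadd hmul α hli hspan hg₂).2
  have hgIm := (isGT_facts δ hadd hmul α hli hspan hgI).1
  -- part 1
  have p11 : RDvd δ g₁ g₁₂ :=
    huniv1 g₁₂ (fun j hj => hdvd12 j (Finset.mem_union_left _ hj))
  have p12 : RDvd δ g₂ g₁₂ :=
    huniv2 g₁₂ (fun j hj => hdvd12 j (Finset.mem_union_right _ hj))
  have p13 : ∀ h, RDvd δ g₁ h → RDvd δ g₂ h → RDvd δ g₁₂ h := by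
    intro h hh1 hh2
    refine huniv12 h ?_
    intro j hj
    rcases Finset.mem_union.mp hj with hj1 | hj2
    · exact rdvd_trans δ hadd hmul (hdvd1 j hj1) hh1
    · exact rdvd_trans δ hadd hmul (hdvd2 j hj2) hh2
  have pI1 : RDvd δ gI g₁ :=
    hunivI g₁ (fun j hj => hdvd1 j (Finset.mem_of_mem_inter_left hj))
  have pI2 : RDvd δ gI g₂ :=
    hunivI g₂ (fun j hj => hdvd2 j (Finset.mem_of_mem_inter_right hj))
  refine ⟨⟨p11, p12, p13⟩, pI1, pI2, ?_⟩
  -- the gcrd argument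
  obtain ⟨d, Dd, hdmon, hdcomb, hdg1, hdg2⟩ := exists_gcrd δ hadd hmul hg1m hg2m
  have hgId : RDvd δ gI d := rdvd_comb δ hadd hmul pI1 pI2 hdcomb
  obtain ⟨qd, hqd⟩ := (rdvd_iff δ hadd hmul gI d).mp hgId
  have hqmon := monic_of_mul δ hadd hmul hqd hgIm hdmon
  obtain ⟨Q, hQ⟩ := (rdvd_iff δ hadd hmul d g₁).mp hdg1
  have hQmon := monic_of_mul δ hadd hmul hQ hdmon hg1m
  have hcomp : evL δ hadd hmul g₁ = (evL δ hadd hmul Q) ∘ₗ (evL δ hadd hmul d) := by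
    apply LinearMap.ext
    intro x
    rw [LinearMap.comp_apply, evL_apply, evL_apply, evL_apply, hQ, ev_sMul δ hadd hmul]
  have h1 : Module.finrank (consts δ hadd hmul) ↥(Sol δ hadd hmul g₁)
      ≤ Module.finrank (consts δ hadd hmul) ↥(Sol δ hadd hmul Q)
        + Module.finrank (consts δ hadd hmul) ↥(Sol δ hadd hmul d) := by
    have h2 := finrank_ker_comp (evL δ hadd hmul Q) (evL δ hadd hmul d)
    rw [← hcomp] at h2
    exact h2
  have hsol1rank : Module.finrank (consts δ hadd hmul) ↥(Sol δ hadd hmul g₁) = T₁.card := by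
    rw [hSol1, finrank_VT δ hadd hmul α hli hspan]
  have hQrank := sol_rank_le δ hadd hmul (FD δ hadd hmul α hli hspan) _ Q hQmon.1
  have hDdle : Dd ≤ Module.finrank (consts δ hadd hmul) ↥(Sol δ hadd hmul d) := by
    have h3 := hQmon.2
    omega
  have hsolled : Sol δ hadd hmul d ≤ Submodule.span (consts δ hadd hmul)
      (⇑(bC δ hadd hmul α hli hspan) '' ↑(T₁ ∩ T₂)) := by
    intro x hx
    have hx1 : x ∈ Sol δ hadd hmul g₁ := by
      rw [mem_sol δ hadd hmul] at hx ⊢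
      exact sol_of_dvd δ hadd hmul hdg1 hx
    have hx2 : x ∈ Sol δ hadd hmul g₂ := by
      rw [mem_sol δ hadd hmul] at hx ⊢
      exact sol_of_dvd δ hadd hmul hdg2 hx
    rw [hSol1, Module.Basis.mem_span_image] at hx1
    rw [hSol2, Module.Basis.mem_span_image] at hx2
    rw [Module.Basis.mem_span_image, Finset.coe_inter]
    exact Set.subset_inter hx1 hx2
  have hDdle2 : Dd ≤ (T₁ ∩ T₂).card := by
    have h4 := Submodule.finrank_mono hsolled
    rw [finrank_VT δ hadd hmul α hli hspan] at h4
    omega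
  have hDdeq : Dd = (T₁ ∩ T₂).card := le_antisymm hDdle2 hqmon.2
  have hqone : qd = Finsupp.single 0 1 := by
    have h0 : IsMonicOfDeg qd 0 := by
      have h5 := hqmon.1
      rwa [hDdeq, Nat.sub_self] at h5
    ext n
    rcases Nat.eq_zero_or_pos n with rfl | hpos
    · rw [h0.1, Finsupp.single_eq_same]
    · rw [h0.2 n (by omega), Finsupp.single_apply, if_neg (by omega)]
  have hdgI : d = gI := by rw [hqd, hqone, sMul_one_left δ hadd hmul]
  intro h hh1 hh2
  have h6 := rdvd_comb δ hadd hmul hh1 hh2 hdcomb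
  rwa [hdgI] at h6
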